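/- The following two equations hold in all μ-continuous Chomsky algebras: for every interpretation σ over a μ-continuous Chomsky algebra and all terms a, b with x ∉ FV(a) ∪ FV(b), σ(a·μx.(1 + x·b)) = σ(μx.(a + x·b)) and σ((μx.(1 + b·x))·a) = σ(μx.(a + b·x)). -/

import Mathlib

/-- μ-expressions over a set `X` of variables:
`t ::= x | t + t | t·t | 0 | 1 | μx.t`. -/
inductive MuTerm (X : Type) : Type
  | var : X → MuTerm X
  | zero : MuTerm X
  | one : MuTerm X
  | add : MuTerm X → MuTerm X → MuTerm X
  | mul : MuTerm X → MuTerm X → MuTerm X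
  | mu : X → MuTerm X → MuTerm X

namespace MuTerm

variable {X : Type}

/-- Size of a term (used for termination of substitution). -/
def size : MuTerm X → ℕ
  | var _ => 1
  | zero => 1
  | one => 1
  | add s t => size s + size t + 1
  | mul s t => size s + size t + 1
  | mu _ t => size t + 1

variable [DecidableEq X]

/-- Free variables of a μ-expression. -/
def fv : MuTerm X → Finset X
  | var x => {x}
  | zero => ∅
  | one => ∅
  | add s t => fv s ∪ fv t
  | mul s t => fv s ∪ fv t
  | mu x t => fv t \ {x}

/-- All (free and bound) variables of a μ-expression. -/
def vars : MuTerm X → Finset X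
  | var x => {x}
  | zero => ∅
  | one => ∅
  | add s t => vars s ∪ vars t
  | mul s t => vars s ∪ vars t
  | mu x t => insert x (vars t)

/-- Rename free occurrences of the variable `y` to `z`. -/
def rename (y z : X) : MuTerm X → MuTerm X
  | var x => if x = y then var z else var x
  | zero => zero
  | one => one
  | add s t => add (rename y z s) (rename y z t)
  | mul s t => mul (rename y z s) (rename y z t)
  | mu x t => if x = y then mu x t else mu x (rename y z t)

theorem size_rename (y z : X) : ∀ t : MuTerm X, (rename y z t).size = t.size
  | var x => by simp only [rename]; split <;> rfl
  | zero => rfl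
  | one => rfl
  | add s t => by simp [rename, size, size_rename y z s, size_rename y z t]
  | mul s t => by simp [rename, size, size_rename y z s, size_rename y z t]
  | mu x t => by
      simp only [rename]; split
      · rfl
      · simp [size, size_rename y z t]

variable [Infinite X]

/-- Capture-avoiding substitution `t[x := u]`: substitute `u` for the free
occurrences of `x` in the last argument, renaming bound variables to fresh
ones to avoid capture. -/
noncomputable def subst (x : X) (u : MuTerm X) : MuTerm X → MuTerm X
  | var y => if y = x then u else var y
  | zero => zero
  | one => one
  | add s t => add (subst x u s) (subst x u t)
  | mul s t => mul (subst x u s) (subst x u t)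
  | mu y t =>
    if y = x then mu y t
    else
      let z : X := Classical.choose (Infinite.exists_notMem_finset (vars t ∪ fv u ∪ {x}))
      mu z (subst x u (rename y z t))
  termination_by t => size t
  decreasing_by
    all_goals simp only [size, size_rename]
    all_goals omega

/-- The `n`-th approximant `nx.t`: `0x.t = 0`, `(n+1)x.t = t[x := nx.t]`. -/
noncomputable def napprox : ℕ → X → MuTerm X → MuTerm X
  | 0, _, _ => zero
  | n + 1, x, t => subst x (napprox n x t) t

end MuTerm

/-- Polynomial functions over a semiring `C` in `n` indeterminates: functions
built from constants in `C`, projections, addition, and multiplication. -/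
inductive IsPolyFun {C : Type} [Semiring C] : {n : ℕ} → ((Fin n → C) → C) → Prop
  | const {n : ℕ} (c : C) : IsPolyFun fun _ : Fin n → C => c
  | proj {n : ℕ} (i : Fin n) : IsPolyFun fun v => v i
  | add {n : ℕ} {p q : (Fin n → C) → C} :
      IsPolyFun p → IsPolyFun q → IsPolyFun fun v => p v + q v
  | mul {n : ℕ} {p q : (Fin n → C) → C} :
      IsPolyFun p → IsPolyFun q → IsPolyFun fun v => p v * q v

/-- A Chomsky algebra is an idempotent semiring (ordered by `a ≤ b ↔ a + b = b`)
in which every finite system of polynomial inequalities `pᵢ ≤ xᵢ` has a least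
solution. -/
class ChomskyAlgebra (C : Type) extends IdemSemiring C where
  algClosed : ∀ {n : ℕ} (p : Fin n → (Fin n → C) → C), (∀ i, IsPolyFun (p i)) →
    ∃ sol : Fin n → C, (∀ i, p i sol ≤ sol i) ∧
      ∀ τ : Fin n → C, (∀ i, p i τ ≤ τ i) → ∀ i, sol i ≤ τ i

/-- `IsInterp eval` says that `eval` is the family of interpretations of
μ-expressions over the Chomsky algebra `C`, one for each valuation `v : X → C`:
each `eval v` is a homomorphism with respect to the semiring operations, and
`eval v (μx.t)` is the least `a` with `eval v[x↦a] t ≤ a`. -/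
structure IsInterp {X C : Type} [DecidableEq X] [Infinite X] [ChomskyAlgebra C]
    (eval : (X → C) → MuTerm X → C) : Prop where
  var : ∀ (v : X → C) (x : X), eval v (.var x) = v x
  zero : ∀ v, eval v .zero = 0
  one : ∀ v, eval v .one = 1
  add : ∀ v s t, eval v (.add s t) = eval v s + eval v t
  mul : ∀ v s t, eval v (.mul s t) = eval v s * eval v t
  mu : ∀ (v : X → C) (x : X) (t : MuTerm X),
    IsLeast {a : C | eval (Function.update v x a) t ≤ a} (eval v (.mu x t))

/-- A Chomsky algebra `C` is μ-continuous if for every interpretation `σ` over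
`C`, all `c, d ∈ C`, and every term `t`,
`c·σ(μx.t)·d = sup_{n ≥ 0} c·σ(nx.t)·d` (in particular the supremum exists). -/
def MuContinuous (C : Type) [ChomskyAlgebra C] : Prop :=
  ∀ (X : Type) [DecidableEq X] [Infinite X] (eval : (X → C) → MuTerm X → C),
    IsInterp eval → ∀ (v : X → C) (c d : C) (x : X) (t : MuTerm X),
      IsLUB (Set.range fun n : ℕ => c * eval v (MuTerm.napprox n x t) * d)
        (c * eval v (.mu x t) * d)

/-- A language interpretation `τ : T X → P(Y*)`: a homomorphism for the
semiring operations on languages with `τ(μx.t) = ⋃ n, τ(nx.t)`. -/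
structure IsLangInterp {X Y : Type} [DecidableEq X] [Infinite X]
    (τ : MuTerm X → Language Y) : Prop where
  zero : τ .zero = 0
  one : τ .one = 1
  add : ∀ s t, τ (.add s t) = τ s + τ t
  mul : ∀ s t, τ (.mul s t) = τ s * τ t
  mu : ∀ (x : X) (t : MuTerm X), τ (.mu x t) = ⨆ n : ℕ, τ (MuTerm.napprox n x t)

/-- The canonical interpretation `L_X : T X → P(X*)`: the language
interpretation with `L_X(x) = {x}`. -/
def IsCanonicalInterp {X : Type} [DecidableEq X] [Infinite X]
    (L : MuTerm X → Language X) : Prop :=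
  IsLangInterp L ∧ ∀ x : X, L (.var x) = {[x]}

/-- For a word `w = x₁⋯x_k ∈ X*` and `σ : X → K`, `wordProd σ w` is the
product `σ(x₁)⋯σ(x_k)` in `K`, with the empty word mapped to `1`. -/
def wordProd {X K : Type} [Monoid K] (σ : X → K) (w : List X) : K :=
  (w.map σ).prod

/-- `IsLangEval E` says that `E` is the family of structurally induced language
interpretations, one for each assignment `σ : X → P(Y*)` of languages to
variables: each `E σ` is a homomorphism for the semiring operations on
languages, with `E σ (μx.t) = ⋃ n, E σ (nx.t)`. -/
structure IsLangEval {X Y : Type} [DecidableEq X] [Infinite X]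
    (E : (X → Language Y) → MuTerm X → Language Y) : Prop where
  var : ∀ (σ : X → Language Y) (x : X), E σ (.var x) = σ x
  zero : ∀ σ, E σ .zero = 0
  one : ∀ σ, E σ .one = 1
  add : ∀ σ s t, E σ (.add s t) = E σ s + E σ t
  mul : ∀ σ s t, E σ (.mul s t) = E σ s * E σ t
  mu : ∀ (σ : X → Language Y) (x : X) (t : MuTerm X),
    E σ (.mu x t) = ⨆ n : ℕ, E σ (MuTerm.napprox n x t)

section Aux

variable {X C : Type} [DecidableEq X] [Infinite X] [ChomskyAlgebra C]
  {eval : (X → C) → MuTerm X → C}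

/-- Free variables are variables. -/
theorem fv_subset_vars : ∀ t : MuTerm X, t.fv ⊆ t.vars
  | .var x => by simp [MuTerm.fv, MuTerm.vars]
  | .zero => by simp [MuTerm.fv, MuTerm.vars]
  | .one => by simp [MuTerm.fv, MuTerm.vars]
  | .add s t => by
      simp only [MuTerm.fv, MuTerm.vars]
      exact Finset.union_subset_union (fv_subset_vars s) (fv_subset_vars t)
  | .mul s t => by
      simp only [MuTerm.fv, MuTerm.vars]
      exact Finset.union_subset_union (fv_subset_vars s) (fv_subset_vars t)
  | .mu x t => by
      simp only [MuTerm.fv, MuTerm.vars]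
      exact (Finset.sdiff_subset).trans ((fv_subset_vars t).trans (Finset.subset_insert x _))

/-- The interpretation only depends on the values of the valuation on free
variables. -/
theorem eval_congr (h : IsInterp eval) :
    ∀ (t : MuTerm X) (v w : X → C), (∀ y ∈ t.fv, v y = w y) → eval v t = eval w t
  | .var x, v, w, hvw => by
      rw [h.var, h.var]; exact hvw x (by simp [MuTerm.fv])
  | .zero, v, w, _ => by rw [h.zero, h.zero]
  | .one, v, w, _ => by rw [h.one, h.one]
  | .add s t, v, w, hvw => by
      rw [h.add, h.add,
        eval_congr h s v w (fun y hy => hvw y (by simp [MuTerm.fv, hy])),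
        eval_congr h t v w (fun y hy => hvw y (by simp [MuTerm.fv, hy]))]
  | .mul s t, v, w, hvw => by
      rw [h.mul, h.mul,
        eval_congr h s v w (fun y hy => hvw y (by simp [MuTerm.fv, hy])),
        eval_congr h t v w (fun y hy => hvw y (by simp [MuTerm.fv, hy]))]
  | .mu x t, v, w, hvw => by
      have hset : {a : C | eval (Function.update v x a) t ≤ a}
          = {a : C | eval (Function.update w x a) t ≤ a} := by
        ext a
        simp only [Set.mem_setOf_eq]
        rw [eval_congr h t (Function.update v x a) (Function.update w x a)
          (fun y hy => by
            by_cases hyx : y = x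
            · subst hyx; simp
            · rw [Function.update_of_ne hyx, Function.update_of_ne hyx]
              exact hvw y (by simp [MuTerm.fv, hy, hyx]))]
      exact (h.mu v x t).unique (hset ▸ h.mu w x t)

/-- Semantics of renaming a variable, provided the new name avoids all
variables of the term. -/
theorem eval_rename (h : IsInterp eval) :
    ∀ (t : MuTerm X) (y z : X), z ∉ t.vars →
      ∀ v : X → C, eval v (t.rename y z) = eval (Function.update v y (v z)) t
  | .var x, y, z, _, v => by
      simp only [MuTerm.rename]
      split
      · next hxy => subst hxy; rw [h.var, h.var, Function.update_self]
      · next hxy => rw [h.var, h.var, Function.update_of_ne hxy]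
  | .zero, y, z, _, v => by rw [MuTerm.rename, h.zero, h.zero]
  | .one, y, z, _, v => by rw [MuTerm.rename, h.one, h.one]
  | .add s t, y, z, hz, v => by
      rw [MuTerm.rename, h.add, h.add,
        eval_rename h s y z (fun hs => hz (by simp [MuTerm.vars, hs])) v,
        eval_rename h t y z (fun ht => hz (by simp [MuTerm.vars, ht])) v]
  | .mul s t, y, z, hz, v => by
      rw [MuTerm.rename, h.mul, h.mul,
        eval_rename h s y z (fun hs => hz (by simp [MuTerm.vars, hs])) v,
        eval_rename h t y z (fun ht => hz (by simp [MuTerm.vars, ht])) v]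
  | .mu x t, y, z, hz, v => by
      have hzx : z ≠ x := fun hzx => hz (by simp [MuTerm.vars, hzx])
      have hzt : z ∉ t.vars := fun hzt => hz (by simp [MuTerm.vars, hzt])
      simp only [MuTerm.rename]
      split
      · next hxy =>
          subst hxy
          exact eval_congr h (.mu x t) v (Function.update v x (v z))
            (fun w hw => by
              have hwx : w ≠ x := by simp [MuTerm.fv] at hw; exact hw.2
              rw [Function.update_of_ne hwx])
      · next hxy =>
          have hset : {a : C | eval (Function.update v x a) (t.rename y z) ≤ a}
              = {a : C | eval (Function.update (Function.update v y (v z)) x a) t ≤ a} := by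
            ext a
            simp only [Set.mem_setOf_eq]
            rw [eval_rename h t y z hzt (Function.update v x a)]
            rw [Function.update_of_ne hzx]
            rw [Function.update_comm (fun hyx => hxy hyx.symm)]
          exact (h.mu v x (t.rename y z)).unique (hset ▸ h.mu (Function.update v y (v z)) x t)

/-- The substitution lemma. -/
theorem eval_subst (h : IsInterp eval) (x : X) (u : MuTerm X) :
    ∀ (n : ℕ) (t : MuTerm X), t.size ≤ n → ∀ v : X → C,
      eval v (MuTerm.subst x u t) = eval (Function.update v x (eval v u)) t := by
  intro n
  induction n with
  | zero => intro t hsz; cases t <;> simp [MuTerm.size] at hsz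
  | succ n ih =>
    intro t hsz v
    cases t with
    | var y =>
        rw [MuTerm.subst]
        split
        · next hyx => subst hyx; rw [h.var, Function.update_self]
        · next hyx => rw [h.var, h.var, Function.update_of_ne hyx]
    | zero => rw [MuTerm.subst, h.zero, h.zero]
    | one => rw [MuTerm.subst, h.one, h.one]
    | add s t =>
        simp only [MuTerm.size] at hsz
        rw [MuTerm.subst, h.add, h.add, ih s (by omega) v, ih t (by omega) v]
    | mul s t =>
        simp only [MuTerm.size] at hsz
        rw [MuTerm.subst, h.mul, h.mul, ih s (by omega) v, ih t (by omega) v]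
    | mu y t =>
        simp only [MuTerm.size] at hsz
        rw [MuTerm.subst]
        split
        · next hyx =>
            subst hyx
            exact eval_congr h (.mu y t) v (Function.update v y (eval v u))
              (fun w hw => by
                have hwy : w ≠ y := by simp [MuTerm.fv] at hw; exact hw.2
                rw [Function.update_of_ne hwy])
        · next hyx =>
            set z : X :=
              Classical.choose (Infinite.exists_notMem_finset (t.vars ∪ u.fv ∪ {x})) with hzdef
            have hzspec := Classical.choose_spec
              (Infinite.exists_notMem_finset (t.vars ∪ u.fv ∪ {x}))
            rw [← hzdef] at hzspec
            simp only [Finset.mem_union, Finset.mem_singleton, not_or] at hzspec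
            obtain ⟨⟨hzt, hzu⟩, hzx⟩ := hzspec
            have hset : {a : C | eval (Function.update v z a) (MuTerm.subst x u (t.rename y z)) ≤ a}
                = {a : C | eval (Function.update (Function.update v x (eval v u)) y a) t ≤ a} := by
              ext a
              simp only [Set.mem_setOf_eq]
              rw [ih (t.rename y z) (by rw [MuTerm.size_rename]; omega) (Function.update v z a)]
              have hu : eval (Function.update v z a) u = eval v u :=
                eval_congr h u _ v (fun w hw => by
                  have hwz : w ≠ z := fun hwz => hzu (hwz ▸ hw)
                  exact Function.update_of_ne hwz _ _)
              rw [hu]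
              rw [eval_rename h t y z hzt]
              have hvz : Function.update (Function.update v z a) x (eval v u) z = a := by
                rw [Function.update_of_ne hzx, Function.update_self]
              rw [hvz]
              rw [eval_congr h t
                (Function.update (Function.update (Function.update v z a) x (eval v u)) y a)
                (Function.update (Function.update v x (eval v u)) y a)
                (fun w hw => by
                  by_cases hwy : w = y
                  · subst hwy; simp
                  · rw [Function.update_of_ne hwy, Function.update_of_ne hwy]
                    by_cases hwx : w = x
                    · subst hwx; simp
                    · rw [Function.update_of_ne hwx, Function.update_of_ne hwx]
                      have hwz : w ≠ z := fun hwz => hzt (hwz ▸ fv_subset_vars t hw)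
                      rw [Function.update_of_ne hwz])]
            exact (h.mu v z _).unique (hset ▸ h.mu (Function.update v x (eval v u)) y t)

theorem subst_add {x : X} {u s t : MuTerm X} :
    MuTerm.subst x u (.add s t) = .add (MuTerm.subst x u s) (MuTerm.subst x u t) := by
  rw [MuTerm.subst]

theorem subst_mul {x : X} {u s t : MuTerm X} :
    MuTerm.subst x u (.mul s t) = .mul (MuTerm.subst x u s) (MuTerm.subst x u t) := by
  rw [MuTerm.subst]

theorem subst_var_self {x : X} {u : MuTerm X} : MuTerm.subst x u (.var x) = u := by
  rw [MuTerm.subst]; simp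

theorem subst_one {x : X} {u : MuTerm X} : MuTerm.subst x u (.one) = .one := by
  rw [MuTerm.subst]

end Aux

/-- `a·μx.(1 + x·b) = μx.(a + x·b)` and
`(μx.(1 + b·x))·a = μx.(a + b·x)` hold in all μ-continuous Chomsky algebras. -/
theorem statement13 {X C : Type} [DecidableEq X] [Infinite X] [ChomskyAlgebra C]
    (hC : MuContinuous C) (eval : (X → C) → MuTerm X → C) (h : IsInterp eval)
    (v : X → C) (a b : MuTerm X) (x : X)
    (hxa : x ∉ MuTerm.fv a) (hxb : x ∉ MuTerm.fv b) :
    eval v (.mul a (.mu x (.add .one (.mul (.var x) b)))) =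
      eval v (.mu x (.add a (.mul (.var x) b))) ∧
    eval v (.mul (.mu x (.add .one (.mul b (.var x)))) a) =
      eval v (.mu x (.add a (.mul b (.var x)))) := by
  have hsub : ∀ (t u : MuTerm X) (v : X → C), x ∉ t.fv →
      eval v (MuTerm.subst x u t) = eval v t := by
    intro t u v hx
    rw [eval_subst h x u t.size t le_rfl v]
    exact eval_congr h t _ v (fun y hy => by
      have hyx : y ≠ x := fun hyx => hx (hyx ▸ hy)
      exact Function.update_of_ne hyx _ _)
  set A := eval v a with hA
  set B := eval v b with hB
  constructor
  · set t1 : MuTerm X := .add .one (.mul (.var x) b) with ht1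
    set t2 : MuTerm X := .add a (.mul (.var x) b) with ht2
    have key : ∀ n : ℕ,
        eval v (MuTerm.napprox n x t2) = A * eval v (MuTerm.napprox n x t1) := by
      intro n
      induction n with
      | zero => simp [MuTerm.napprox, h.zero]
      | succ n ih =>
        have e2 : eval v (MuTerm.napprox (n+1) x t2)
            = A + eval v (MuTerm.napprox n x t2) * B := by
          show eval v (MuTerm.subst x (MuTerm.napprox n x t2) t2) = _
          rw [ht2, subst_add, subst_mul, subst_var_self, h.add, h.mul,
            hsub a _ v hxa, hsub b _ v hxb]
        have e1 : eval v (MuTerm.napprox (n+1) x t1)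
            = 1 + eval v (MuTerm.napprox n x t1) * B := by
          show eval v (MuTerm.subst x (MuTerm.napprox n x t1) t1) = _
          rw [ht1, subst_add, subst_mul, subst_var_self, subst_one, h.add, h.mul, h.one,
            hsub b _ v hxb]
        rw [e1, e2, ih, mul_add, mul_one, mul_assoc]
    have h1 := hC X eval h v A 1 x t1
    have h2 := hC X eval h v 1 1 x t2
    simp only [mul_one, one_mul] at h1 h2
    have hfn : (fun n : ℕ => eval v (MuTerm.napprox n x t2))
        = fun n : ℕ => A * eval v (MuTerm.napprox n x t1) := funext key
    rw [hfn] at h2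
    rw [h.mul]
    exact h1.unique h2
  · set t1 : MuTerm X := .add .one (.mul b (.var x)) with ht1
    set t2 : MuTerm X := .add a (.mul b (.var x)) with ht2
    have key : ∀ n : ℕ,
        eval v (MuTerm.napprox n x t2) = eval v (MuTerm.napprox n x t1) * A := by
      intro n
      induction n with
      | zero => simp [MuTerm.napprox, h.zero]
      | succ n ih =>
        have e2 : eval v (MuTerm.napprox (n+1) x t2)
            = A + B * eval v (MuTerm.napprox n x t2) := by
          show eval v (MuTerm.subst x (MuTerm.napprox n x t2) t2) = _
          rw [ht2, subst_add, subst_mul, subst_var_self, h.add, h.mul,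
            hsub a _ v hxa, hsub b _ v hxb]
        have e1 : eval v (MuTerm.napprox (n+1) x t1)
            = 1 + B * eval v (MuTerm.napprox n x t1) := by
          show eval v (MuTerm.subst x (MuTerm.napprox n x t1) t1) = _
          rw [ht1, subst_add, subst_mul, subst_var_self, subst_one, h.add, h.mul, h.one,
            hsub b _ v hxb]
        rw [e1, e2, ih, add_mul, one_mul, mul_assoc]
    have h1 := hC X eval h v 1 A x t1
    have h2 := hC X eval h v 1 1 x t2
    simp only [mul_one, one_mul] at h1 h2
    have hfn : (fun n : ℕ => eval v (MuTerm.napprox n x t2))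
        = fun n : ℕ => eval v (MuTerm.napprox n x t1) * A := funext key
    rw [hfn] at h2
    rw [h.mul]
    exact h1.unique h2
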